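/- Consider a billiard trajectory inside a cone with vertex at the origin, and assume additionally that p k and p (k+1) are linearly independent for every k. Then: (i) α (k+1) = α k − θ k for every k; (ii) θ k > 0 for every k, so the sequence (α k) is strictly decreasing; and (iii) (α k) converges to a limit α ≥ 0. (Lemma 2.3, part 1.) -/

import Mathlib

open InnerProductGeometry RealInnerProductSpace Filter Real

/-- Lemma 2.3, part 1: along a billiard trajectory inside a cone with vertex at
the origin, `α (k+1) = α k − θ k`, the angles `θ k` are positive, `α` is
strictly decreasing, and `α` converges to a limit `α ≥ 0`. -/
theorem billiard_cone_angles {n : ℕ} (hn : 2 ≤ n)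
    (p ν v : ℕ → EuclideanSpace ℝ (Fin n))
    (hp0 : ∀ k, p k ≠ 0) (hpne : ∀ k, p (k + 1) ≠ p k)
    (hν : ∀ k, ‖ν k‖ = 1) (hνp : ∀ k, ⟪ν k, p k⟫ = 0)
    (hv : ∀ k, v k = ‖p (k + 1) - p k‖⁻¹ • (p (k + 1) - p k))
    (hrefl : ∀ k, v (k + 1) = v k - (2 * ⟪v k, ν (k + 1)⟫) • ν (k + 1))
    (hvν : ∀ k, 0 < ⟪v k, ν k⟫)
    (hli : ∀ k, LinearIndependent ℝ ![p k, p (k + 1)])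
    (α θ : ℕ → ℝ)
    (hα : ∀ k, α k = angle (v k) (p k))
    (hθ : ∀ k, θ k = angle (p k) (p (k + 1))) :
    (∀ k, α (k + 1) = α k - θ k) ∧ (∀ k, 0 < θ k) ∧ StrictAnti α ∧
      ∃ a : ℝ, 0 ≤ a ∧ Tendsto α atTop (nhds a) := by
  have hsub : ∀ k, p (k + 1) - p k ≠ 0 := fun k => sub_ne_zero.mpr (hpne k)
  have hnorm : ∀ k, (0:ℝ) < ‖p (k + 1) - p k‖ :=
    fun k => norm_pos_iff.mpr (hsub k)
  have hv1 : ∀ k, ‖v k‖ = 1 := by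
    intro k
    rw [hv k, norm_smul, norm_inv, norm_norm, inv_mul_cancel₀ (hnorm k).ne']
  -- key step
  have hstep : ∀ k, α (k + 1) = α k - θ k := by
    intro k
    -- reflection preserves the angle with p (k+1)
    have hinner : ⟪v (k + 1), p (k + 1)⟫ = ⟪v k, p (k + 1)⟫ := by
      rw [hrefl k, inner_sub_left, real_inner_smul_left, hνp (k + 1)]
      ring
    have h1 : α (k + 1) = angle (v k) (p (k + 1)) := by
      rw [hα, InnerProductGeometry.angle, InnerProductGeometry.angle, hinner,
        hv1 k, hv1 (k + 1)]
    -- p (k+1) - p k is a positive multiple of v k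
    have hsm : angle (p k) (v k) = angle (p k) (p (k + 1) - p k) := by
      rw [hv k]
      exact angle_smul_right_of_pos _ _ (inv_pos.mpr (hnorm k))
    have hsm' : angle (p (k + 1)) (v k) = angle (p (k + 1)) (p (k + 1) - p k) := by
      rw [hv k]
      exact angle_smul_right_of_pos _ _ (inv_pos.mpr (hnorm k))
    have hp1 : p (k + 1) ≠ 0 := by
      have := (hli k).ne_zero 1
      simpa using this
    have htri := angle_add_angle_sub_add_angle_sub_eq_pi (p k) hp1
    have hneg : angle (p k) (p k - p (k + 1)) = π - angle (p k) (v k) := by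
      have : p k - p (k + 1) = -(p (k + 1) - p k) := by abel
      rw [this, angle_neg_right, hsm]
    rw [hneg, ← hsm'] at htri
    have hαk : α k = angle (p k) (v k) := by rw [hα, angle_comm]
    have hαk1 : α (k + 1) = angle (p (k + 1)) (p (k + 1) - p k) := by
      rw [h1, angle_comm, ← hsm', angle_comm]
    rw [hθ, hαk, hαk1]
    linarith
  have hθpos : ∀ k, 0 < θ k := by
    intro k
    rcases lt_or_eq_of_le (angle_nonneg (p k) (p (k + 1))) with h | h
    · rw [hθ]; exact h
    · exfalso
      obtain ⟨-, r, hr, hry⟩ := angle_eq_zero_iff.mp h.symm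
      have := (hli k).eq_zero_of_pair (s := -r) (t := 1) (by rw [hry]; module)
      exact one_ne_zero this.2
  have hanti : StrictAnti α := by
    apply strictAnti_nat_of_succ_lt
    intro k
    rw [hstep k]
    linarith [hθpos k]
  have hbdd : BddBelow (Set.range α) := by
    refine ⟨0, ?_⟩
    rintro x ⟨k, rfl⟩
    rw [hα]
    exact angle_nonneg _ _
  refine ⟨hstep, hθpos, hanti, ⨅ k, α k, ?_, ?_⟩
  · exact le_ciInf fun k => by rw [hα]; exact angle_nonneg _ _
  · exact tendsto_atTop_ciInf hanti.antitone hbdd
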